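/- arXiv:2308.15549 — 4 statements merged into one kernel-verified Lean document; each statement's English description precedes it below -/
import Mathlib

section
/- Let τ > 0, h > 0, and let K : ℝ → ℝ be a nonnegative measurable function supported in (−1,1), symmetric (K(−u)=K(u) for all u), with 2∫₀¹ K(u) du = 1 and ∫₀¹ u K(u) du < ∞. Let g : [0,τ] × [0,τ] → ℝ be measurable and bounded, and uniformly Lipschitz in its second argument: |g(t,r₁) − g(t,r₂)| ≤ L*|r₁ − r₂| for all t, r₁, r₂ ∈ [0,τ], where L* > 0. Then |2∫₀^τ ∫₀^t (1/h) K((t−r)/h) g(t,r) dr dt − ∫₀^τ g(t,t) dt| ≤ 2h (sup_{t∈[0,τ]} |g(t,t)| + τ L*) ∫₀¹ u K(u) du. -/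
open MeasureTheory Set

/-- Lemma 1 (kernel approximation / bias bound): the kernel-smoothed double
integral of `g` against `K_h(x) = (2/h) K(x/h)` restricted to `r ≤ t`
approximates the diagonal integral `∫₀^τ g(t,t) dt` at rate `h`. -/
theorem kernel_bias_bound
    (τ h L : ℝ) (hτ : 0 < τ) (hh : 0 < h) (hL : 0 < L)
    (K : ℝ → ℝ) (hKmeas : Measurable K) (hKnonneg : ∀ u, 0 ≤ K u)
    (hKsupp : ∀ u, u ∉ Set.Ioo (-1 : ℝ) 1 → K u = 0)
    (hKsymm : ∀ u, K (-u) = K u)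
    (hKint : 2 * ∫ u in (0:ℝ)..1, K u = 1)
    (hKmom : IntervalIntegrable (fun u => u * K u) volume 0 1)
    (g : ℝ → ℝ → ℝ) (hgmeas : Measurable (Function.uncurry g))
    (hgbdd : ∃ M, ∀ t ∈ Icc (0:ℝ) τ, ∀ r ∈ Icc (0:ℝ) τ, |g t r| ≤ M)
    (hgLip : ∀ t ∈ Icc (0:ℝ) τ, ∀ r₁ ∈ Icc (0:ℝ) τ, ∀ r₂ ∈ Icc (0:ℝ) τ,
      |g t r₁ - g t r₂| ≤ L * |r₁ - r₂|) :
    |2 * (∫ t in (0:ℝ)..τ, ∫ r in (0:ℝ)..t, (1 / h) * K ((t - r) / h) * g t r)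
        - ∫ t in (0:ℝ)..τ, g t t|
      ≤ 2 * h * ((⨆ t ∈ Icc (0:ℝ) τ, |g t t|) + τ * L) *
          ∫ u in (0:ℝ)..1, u * K u := by
  obtain ⟨M, hM⟩ := hgbdd
  have h0τ : (0:ℝ) ∈ Icc (0:ℝ) τ := ⟨le_refl _, hτ.le⟩
  have hM0 : 0 ≤ M := (abs_nonneg _).trans (hM 0 h0τ 0 h0τ)
  set S : ℝ := ⨆ t ∈ Icc (0:ℝ) τ, |g t t| with hS_def
  set A : ℝ := ∫ u in (0:ℝ)..1, u * K u with hA_def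
  -- K vanishes at 1 and beyond
  have hK0 : ∀ u : ℝ, 1 ≤ u → K u = 0 := fun u hu =>
    hKsupp u (fun hmem => absurd hmem.2 (not_lt.2 hu))
  -- K is integrable on (0,1]
  have hK1 : IntegrableOn K (Ioc (0:ℝ) 1) volume := by
    by_contra hc
    have : (∫ u in (0:ℝ)..1, K u) = 0 := by
      rw [intervalIntegral.integral_of_le zero_le_one]; exact integral_undef hc
    rw [this] at hKint; norm_num at hKint
  have hKI : IntervalIntegrable K volume 0 1 :=
    (intervalIntegrable_iff_integrableOn_Ioc_of_le zero_le_one).2 hK1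
  have hA0 : 0 ≤ A := by
    apply intervalIntegral.integral_nonneg zero_le_one
    intro u hu; exact mul_nonneg hu.1 (hKnonneg u)
  -- sup bounds
  have hbdd : BddAbove (Set.range fun t => ⨆ _ : t ∈ Icc (0:ℝ) τ, |g t t|) := by
    refine ⟨max M 0, ?_⟩
    rintro x ⟨t, rfl⟩
    show (⨆ _ : t ∈ Icc (0:ℝ) τ, |g t t|) ≤ max M 0
    by_cases ht : t ∈ Icc (0:ℝ) τ
    · haveI : Nonempty (t ∈ Icc (0:ℝ) τ) := ⟨ht⟩
      rw [ciSup_const]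
      exact le_max_of_le_left (hM t ht t ht)
    · haveI : IsEmpty (t ∈ Icc (0:ℝ) τ) := ⟨ht⟩
      rw [Real.iSup_of_isEmpty]
      exact le_max_right _ _
  have hSle : ∀ t ∈ Icc (0:ℝ) τ, |g t t| ≤ S := by
    intro t ht
    haveI : Nonempty (t ∈ Icc (0:ℝ) τ) := ⟨ht⟩
    calc |g t t| = ⨆ _ : t ∈ Icc (0:ℝ) τ, |g t t| := (ciSup_const).symm
      _ ≤ S := le_ciSup hbdd t
  have hS0 : 0 ≤ S := (abs_nonneg _).trans (hSle 0 h0τ)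
  -- measurability of g-slices
  have hg1 : ∀ t, Measurable (g t) := fun t =>
    hgmeas.comp (measurable_const.prodMk measurable_id)
  -- The substituted integrand
  set W : ℝ → ℝ → ℝ := fun t u => K u * g t (t - h * u) with hW_def
  set Ψ : ℝ → ℝ → ℝ := fun t u => K u * (if h * u ≤ t then g t (t - h * u) else 0)
    with hΨ_def
  have hΨm : ∀ t, Measurable (Ψ t) := by
    intro t
    exact hKmeas.mul (Measurable.ite
      (measurableSet_le (measurable_id.const_mul h) measurable_const)
      ((hg1 t).comp (measurable_const.sub (measurable_id.const_mul h)))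
      measurable_const)
  have hΨbd : ∀ t ∈ Icc (0:ℝ) τ, ∀ u ∈ Ioc (0:ℝ) 1, |Ψ t u| ≤ M * K u := by
    intro t ht u hu
    simp only [hΨ_def, abs_mul, abs_of_nonneg (hKnonneg u)]
    by_cases hc : h * u ≤ t
    · rw [if_pos hc]
      have hmem : t - h * u ∈ Icc (0:ℝ) τ := by
        constructor
        · linarith
        · have : 0 ≤ h * u := le_of_lt (mul_pos hh hu.1)
          linarith [ht.2]
      calc K u * |g t (t - h * u)| ≤ K u * M :=
            mul_le_mul_of_nonneg_left (hM t ht _ hmem) (hKnonneg u)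
        _ = M * K u := mul_comm _ _
    · rw [if_neg hc]
      simp only [abs_zero, mul_zero]
      exact mul_nonneg hM0 (hKnonneg u)
  have hΨint : ∀ t ∈ Icc (0:ℝ) τ, IntegrableOn (Ψ t) (Ioc (0:ℝ) 1) volume := by
    intro t ht
    refine Integrable.mono' (hK1.const_mul M) ((hΨm t).aestronglyMeasurable) ?_
    filter_upwards [ae_restrict_mem measurableSet_Ioc] with u hu
    simpa using hΨbd t ht u hu
  have hΨII : ∀ t ∈ Icc (0:ℝ) τ, IntervalIntegrable (Ψ t) volume 0 1 := fun t ht =>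
    (intervalIntegrable_iff_integrableOn_Ioc_of_le zero_le_one).2 (hΨint t ht)
  -- integrability of W on [0,c] for suitable c
  have hWint : ∀ t ∈ Icc (0:ℝ) τ, ∀ c : ℝ, 0 ≤ c → c ≤ 1 → h * c ≤ t →
      IntervalIntegrable (W t) volume 0 c := by
    intro t ht c hc0 hc1 hct
    rw [intervalIntegrable_iff_integrableOn_Ioc_of_le hc0]
    have hsub : Ioc (0:ℝ) c ⊆ Ioc (0:ℝ) 1 := Ioc_subset_Ioc_right hc1
    refine Integrable.mono' ((hK1.mono_set hsub).const_mul M)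
      (((hKmeas.mul ((hg1 t).comp (measurable_const.sub
        (measurable_id.const_mul h)))).aestronglyMeasurable)) ?_
    filter_upwards [ae_restrict_mem measurableSet_Ioc] with u hu
    have hu0 : 0 < u := hu.1
    have huc : u ≤ c := hu.2
    have hhu : h * u ≤ t := le_trans (by nlinarith) hct
    have hmem : t - h * u ∈ Icc (0:ℝ) τ := by
      constructor
      · linarith
      · nlinarith [ht.2]
    simp only [hW_def, Real.norm_eq_abs, abs_mul, abs_of_nonneg (hKnonneg u)]
    calc K u * |g t (t - h * u)| ≤ K u * M :=
          mul_le_mul_of_nonneg_left (hM t ht _ hmem) (hKnonneg u)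
      _ = M * K u := mul_comm _ _
  -- Step: substitution
  have hsub : ∀ t ∈ Icc (0:ℝ) τ,
      (∫ r in (0:ℝ)..t, (1 / h) * K ((t - r) / h) * g t r) = ∫ u in (0:ℝ)..1, Ψ t u := by
    intro t ht
    have ht0 : 0 ≤ t := ht.1
    set f : ℝ → ℝ := fun r => (1 / h) * K ((t - r) / h) * g t r with hf_def
    have e1 : (∫ r in (0:ℝ)..t, f r) = ∫ x in (0:ℝ)..t, f (t - x) := by
      have := intervalIntegral.integral_comp_sub_left (a := (0:ℝ)) (b := t) f t
      rw [sub_self, sub_zero] at this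
      exact this.symm
    set G : ℝ → ℝ := fun u => (1 / h) * W t u with hG_def
    have e2 : (fun x => f (t - x)) = fun x => G (x / h) := by
      funext x
      simp only [hf_def, hG_def, hW_def]
      rw [sub_sub_cancel, mul_div_cancel₀ _ hh.ne']
      ring
    have e3 : (∫ x in (0:ℝ)..t, G (x / h)) = h • ∫ u in (0:ℝ)/h..t/h, G u :=
      intervalIntegral.integral_comp_div G hh.ne'
    have e4 : (∫ u in (0:ℝ)..t/h, G u) = (1/h) * ∫ u in (0:ℝ)..t/h, W t u :=
      intervalIntegral.integral_const_mul _ _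
    have e5 : (∫ r in (0:ℝ)..t, f r) = ∫ u in (0:ℝ)..t/h, W t u := by
      rw [e1, e2, e3, zero_div, e4, smul_eq_mul]
      field_simp
    rw [e5]
    -- now relate ∫₀^{t/h} W with ∫₀^1 Ψ
    rcases le_or_gt h t with hht | hht
    · -- t/h ≥ 1
      have h1 : (1:ℝ) ≤ t / h := (one_le_div hh).2 hht
      have hW1 : IntervalIntegrable (W t) volume 0 1 :=
        hWint t ht 1 zero_le_one le_rfl (by linarith)
      have hWz : IntervalIntegrable (W t) volume 1 (t/h) := by
        rw [intervalIntegrable_iff_integrableOn_Ioc_of_le h1]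
        refine (integrableOn_congr_fun (g := fun _ => (0:ℝ)) ?_ measurableSet_Ioc).2
          integrableOn_zero
        intro u hu
        simp [hW_def, hK0 u hu.1.le]
      have hz : (∫ u in (1:ℝ)..(t/h), W t u) = 0 := by
        rw [intervalIntegral.integral_of_le h1]
        have heq : EqOn (W t) (fun _ => (0:ℝ)) (Ioc 1 (t/h)) := fun u hu => by
          simp [hW_def, hK0 u hu.1.le]
        rw [setIntegral_congr_fun measurableSet_Ioc heq]
        simp
      have hsplit : (∫ u in (0:ℝ)..t/h, W t u)
          = (∫ u in (0:ℝ)..1, W t u) + ∫ u in (1:ℝ)..(t/h), W t u :=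
        (intervalIntegral.integral_add_adjacent_intervals hW1 hWz).symm
      rw [hsplit, hz, add_zero]
      apply intervalIntegral.integral_congr
      intro u hu
      rw [uIcc_of_le zero_le_one] at hu
      have : h * u ≤ t := by nlinarith [hu.1, hu.2]
      simp [hW_def, hΨ_def, if_pos this]
    · -- t/h < 1
      have h1 : t / h ≤ 1 := le_of_lt ((div_lt_one hh).2 hht)
      have h0 : 0 ≤ t / h := div_nonneg ht0 hh.le
      have hW1 : IntervalIntegrable (W t) volume 0 (t/h) :=
        hWint t ht (t/h) h0 h1 (le_of_eq (mul_div_cancel₀ t hh.ne'))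
      have hΨa : IntervalIntegrable (Ψ t) volume 0 (t/h) := by
        apply (hΨII t ht).mono_set
        rw [uIcc_of_le h0, uIcc_of_le zero_le_one]
        exact Icc_subset_Icc le_rfl h1
      have hΨb : IntervalIntegrable (Ψ t) volume (t/h) 1 := by
        apply (hΨII t ht).mono_set
        rw [uIcc_of_le h1, uIcc_of_le zero_le_one]
        exact Icc_subset_Icc h0 le_rfl
      have hz : (∫ u in (t/h)..1, Ψ t u) = 0 := by
        rw [intervalIntegral.integral_of_le h1]
        have heq : EqOn (Ψ t) (fun _ => (0:ℝ)) (Ioc (t/h) 1) := by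
          intro u hu
          have hlt : t < h * u := by
            have h2 := hu.1
            calc t = h * (t/h) := (mul_div_cancel₀ t hh.ne').symm
              _ < h * u := (mul_lt_mul_iff_right₀ hh).2 h2
          simp [hΨ_def, if_neg (not_le.2 hlt)]
        rw [setIntegral_congr_fun measurableSet_Ioc heq]
        simp
      have hsplit : (∫ u in (0:ℝ)..1, Ψ t u)
          = (∫ u in (0:ℝ)..t/h, Ψ t u) + ∫ u in (t/h)..1, Ψ t u :=
        (intervalIntegral.integral_add_adjacent_intervals hΨa hΨb).symm
      rw [hsplit, hz, add_zero]
      apply intervalIntegral.integral_congr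
      intro u hu
      rw [uIcc_of_le h0] at hu
      have : h * u ≤ t := by
        calc h * u ≤ h * (t/h) := (mul_le_mul_iff_right₀ hh).2 hu.2
          _ = t := mul_div_cancel₀ t hh.ne'
      simp [hW_def, hΨ_def, if_pos this]
  -- J: the inner integral as a function of t
  set ν₂ : Measure ℝ := volume.restrict (Ioc (0:ℝ) 1) with hν₂
  set J : ℝ → ℝ := fun t => ∫ u in (0:ℝ)..1, Ψ t u with hJ_def
  have hJeq : J = fun t => ∫ u, Ψ t u ∂ν₂ := by
    funext t; exact intervalIntegral.integral_of_le zero_le_one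
  have hΦm : Measurable fun p : ℝ × ℝ =>
      K p.2 * (if h * p.2 ≤ p.1 then g p.1 (p.1 - h * p.2) else 0) := by
    refine (hKmeas.comp measurable_snd).mul (Measurable.ite ?_ ?_ measurable_const)
    · exact measurableSet_le (measurable_snd.const_mul h) measurable_fst
    · exact hgmeas.comp
        (measurable_fst.prodMk (measurable_fst.sub (measurable_snd.const_mul h)))
  have hJsm : StronglyMeasurable J := by
    rw [hJeq]
    exact hΦm.stronglyMeasurable.integral_prod_right'
  have hJbd : ∀ t ∈ Icc (0:ℝ) τ, |J t| ≤ M * ∫ u in Ioc (0:ℝ) 1, K u := by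
    intro t ht
    have h1 : ∀ᵐ u ∂ν₂, ‖Ψ t u‖ ≤ M * K u := by
      filter_upwards [ae_restrict_mem measurableSet_Ioc] with u hu
      simpa using hΨbd t ht u hu
    have h2 := norm_integral_le_of_norm_le (hK1.const_mul M) h1
    rw [integral_const_mul] at h2
    have h3 : J t = ∫ u, Ψ t u ∂ν₂ := by rw [hJeq]
    rw [h3]
    exact h2
  have hJint : IntervalIntegrable J volume 0 τ := by
    rw [intervalIntegrable_iff_integrableOn_Ioc_of_le hτ.le]
    refine Integrable.mono' (g := fun _ => M * ∫ u in Ioc (0:ℝ) 1, K u)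
      (integrableOn_const measure_Ioc_lt_top.ne) hJsm.aestronglyMeasurable ?_
    filter_upwards [ae_restrict_mem measurableSet_Ioc] with t ht
    simpa using hJbd t ⟨ht.1.le, ht.2⟩
  -- the diagonal function is integrable
  have hdiagm : Measurable fun t : ℝ => g t t :=
    hgmeas.comp (measurable_id.prodMk measurable_id)
  have hdiag : IntervalIntegrable (fun t => g t t) volume 0 τ := by
    rw [intervalIntegrable_iff_integrableOn_Ioc_of_le hτ.le]
    refine Integrable.mono' (g := fun _ => M)
      (integrableOn_const measure_Ioc_lt_top.ne) hdiagm.aestronglyMeasurable ?_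
    filter_upwards [ae_restrict_mem measurableSet_Ioc] with t ht
    simpa using hM t ⟨ht.1.le, ht.2⟩ t ⟨ht.1.le, ht.2⟩
  -- boundary term
  set B : ℝ → ℝ := fun t => ∫ u in Ioc (0:ℝ) 1, (if t < h * u then S else 0) * K u
    with hB_def
  have hFm : Measurable fun p : ℝ × ℝ => (if p.1 < h * p.2 then S else 0) * K p.2 :=
    (Measurable.ite (measurableSet_lt measurable_fst (measurable_snd.const_mul h))
      measurable_const measurable_const).mul (hKmeas.comp measurable_snd)
  have hBsm : StronglyMeasurable B := hFm.stronglyMeasurable.integral_prod_right'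
  have hBbd : ∀ t, |B t| ≤ S * ∫ u in Ioc (0:ℝ) 1, K u := by
    intro t
    have h1 : ∀ᵐ u ∂ν₂, ‖(if t < h * u then S else 0) * K u‖ ≤ S * K u := by
      filter_upwards with u
      rw [Real.norm_eq_abs, abs_mul, abs_of_nonneg (hKnonneg u)]
      by_cases hc : t < h * u
      · rw [if_pos hc, abs_of_nonneg hS0]
      · rw [if_neg hc]
        simpa using mul_nonneg hS0 (hKnonneg u)
    have h2 := norm_integral_le_of_norm_le (hK1.const_mul S) h1
    rwa [integral_const_mul] at h2
  have hBint : IntervalIntegrable B volume 0 τ := by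
    rw [intervalIntegrable_iff_integrableOn_Ioc_of_le hτ.le]
    refine Integrable.mono' (g := fun _ => S * ∫ u in Ioc (0:ℝ) 1, K u)
      (integrableOn_const measure_Ioc_lt_top.ne) hBsm.aestronglyMeasurable ?_
    filter_upwards with t
    simpa using hBbd t
  -- pointwise bound
  have hpt : ∀ t ∈ Icc (0:ℝ) τ, |2 * J t - g t t| ≤ 2 * (L * h * A + B t) := by
    intro t ht
    have hΨi : IntervalIntegrable (Ψ t) volume 0 1 := hΨII t ht
    have hKg : IntervalIntegrable (fun u => K u * g t t) volume 0 1 := hKI.mul_const _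
    have hdif : IntervalIntegrable (fun u => Ψ t u - K u * g t t) volume 0 1 :=
      hΨi.sub hKg
    have hiteK : IntegrableOn (fun u => (if t < h * u then S else 0) * K u)
        (Ioc (0:ℝ) 1) volume := by
      have heq : (fun u => (if t < h * u then S else 0) * K u)
          = Set.indicator {u : ℝ | t < h * u} (fun u => S * K u) := by
        funext u
        by_cases hc : t < h * u <;> simp [Set.indicator, hc]
      rw [heq]
      exact (hK1.const_mul S).indicator
        (measurableSet_lt measurable_const (measurable_id.const_mul h))
    have hiteKI : IntervalIntegrable (fun u => (if t < h * u then S else 0) * K u)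
        volume 0 1 :=
      (intervalIntegrable_iff_integrableOn_Ioc_of_le zero_le_one).2 hiteK
    have hbound : IntervalIntegrable
        (fun u => L * h * (u * K u) + (if t < h * u then S else 0) * K u) volume 0 1 :=
      (hKmom.const_mul (L*h)).add hiteKI
    have e : 2 * J t - g t t = 2 * ∫ u in (0:ℝ)..1, (Ψ t u - K u * g t t) := by
      rw [intervalIntegral.integral_sub hΨi hKg, intervalIntegral.integral_mul_const]
      simp only [hJ_def]
      linear_combination (g t t) * hKint
    have habs : |∫ u in (0:ℝ)..1, (Ψ t u - K u * g t t)|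
        ≤ ∫ u in (0:ℝ)..1, |Ψ t u - K u * g t t| :=
      intervalIntegral.abs_integral_le_integral_abs zero_le_one
    have hmono : (∫ u in (0:ℝ)..1, |Ψ t u - K u * g t t|)
        ≤ ∫ u in (0:ℝ)..1, (L * h * (u * K u) + (if t < h * u then S else 0) * K u) := by
      apply intervalIntegral.integral_mono_on zero_le_one hdif.abs hbound
      intro u hu
      obtain ⟨hu0, hu1⟩ := hu
      by_cases hc : h * u ≤ t
      · have hite : ¬ t < h * u := not_lt.2 hc
        have hmem : t - h * u ∈ Icc (0:ℝ) τ :=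
          ⟨by linarith, by nlinarith [ht.2, hh.le]⟩
        have hdd : Ψ t u - K u * g t t = K u * (g t (t - h * u) - g t t) := by
          simp only [hΨ_def, if_pos hc]; ring
        rw [hdd, if_neg hite, abs_mul, abs_of_nonneg (hKnonneg u)]
        have hlip := hgLip t ht (t - h * u) hmem t ht
        have habs2 : |t - h * u - t| = h * u := by
          rw [show t - h * u - t = -(h * u) by ring, abs_neg,
            abs_of_nonneg (mul_nonneg hh.le hu0)]
        rw [habs2] at hlip
        calc K u * |g t (t - h * u) - g t t| ≤ K u * (L * (h * u)) :=
              mul_le_mul_of_nonneg_left hlip (hKnonneg u)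
          _ = L * h * (u * K u) + 0 * K u := by ring
      · have hlt : t < h * u := not_le.1 hc
        have hdd : Ψ t u - K u * g t t = -(K u * g t t) := by
          simp only [hΨ_def, if_neg hc]; ring
        rw [hdd, if_pos hlt, abs_neg, abs_mul, abs_of_nonneg (hKnonneg u)]
        have h0' : 0 ≤ L * h * (u * K u) :=
          mul_nonneg (mul_nonneg hL.le hh.le) (mul_nonneg hu0 (hKnonneg u))
        have hgs : K u * |g t t| ≤ K u * S :=
          mul_le_mul_of_nonneg_left (hSle t ht) (hKnonneg u)
        nlinarith [hgs]
    have esplit : (∫ u in (0:ℝ)..1,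
          (L * h * (u * K u) + (if t < h * u then S else 0) * K u))
        = L * h * A + B t := by
      rw [intervalIntegral.integral_add (hKmom.const_mul (L*h)) hiteKI,
        intervalIntegral.integral_const_mul]
      congr 1
      simp only [hB_def]
      exact intervalIntegral.integral_of_le zero_le_one
    rw [e, abs_mul, abs_two]
    calc 2 * |∫ u in (0:ℝ)..1, (Ψ t u - K u * g t t)|
        ≤ 2 * ∫ u in (0:ℝ)..1, |Ψ t u - K u * g t t| := by linarith
      _ ≤ 2 * (L * h * A + B t) := by rw [← esplit]; linarith
  -- Fubini bound for the boundary term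
  have hfub : (∫ t in (0:ℝ)..τ, B t) ≤ S * h * A := by
    rw [intervalIntegral.integral_of_le hτ.le]
    haveI i1 : IsFiniteMeasure (volume.restrict (Ioc (0:ℝ) τ)) := by
      haveI := Fact.mk (measure_Ioc_lt_top (a := (0:ℝ)) (b := τ) (μ := volume))
      infer_instance
    haveI i2 : IsFiniteMeasure ν₂ := by
      haveI := Fact.mk (measure_Ioc_lt_top (a := (0:ℝ)) (b := 1) (μ := volume))
      rw [hν₂]; infer_instance
    set μ₁ : Measure ℝ := volume.restrict (Ioc (0:ℝ) τ) with hμ₁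
    have hgbig : Integrable (fun p : ℝ × ℝ => S * K p.2) (μ₁.prod ν₂) := by
      refine (integrable_prod_iff ?_).2 ⟨?_, ?_⟩
      · exact ((hKmeas.comp measurable_snd).const_mul S).aestronglyMeasurable
      · exact Filter.Eventually.of_forall fun x => hK1.const_mul S
      · exact integrable_const (∫ (y : ℝ), ‖S * K y‖ ∂ν₂)
    have hprod : Integrable
        (Function.uncurry fun t u => (if t < h * u then S else 0) * K u)
        (μ₁.prod ν₂) := by
      refine Integrable.mono' hgbig hFm.aestronglyMeasurable ?_
      filter_upwards with p
      rw [Function.uncurry]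
      rw [Real.norm_eq_abs, abs_mul, abs_of_nonneg (hKnonneg p.2)]
      by_cases hc : p.1 < h * p.2
      · rw [if_pos hc, abs_of_nonneg hS0]
      · rw [if_neg hc]
        simpa using mul_nonneg hS0 (hKnonneg p.2)
    have hswap := integral_integral_swap
      (f := fun t u => (if t < h * u then S else 0) * K u) hprod
    have hstep : (∫ t, B t ∂μ₁)
        = ∫ u, (∫ t, (if t < h * u then S else 0) * K u ∂μ₁) ∂ν₂ := hswap
    rw [hstep]
    have hKm1 : IntegrableOn (fun u => u * K u) (Ioc (0:ℝ) 1) volume :=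
      (intervalIntegrable_iff_integrableOn_Ioc_of_le zero_le_one).1 hKmom
    have hinner : ∀ u ∈ Ioc (0:ℝ) 1,
        (∫ t, (if t < h * u then S else 0) * K u ∂μ₁) ≤ S * h * (u * K u) := by
      intro u hu
      have heq : (fun t => (if t < h * u then S else 0) * K u)
          = Set.indicator (Iio (h * u)) (fun _ => S * K u) := by
        funext t
        by_cases hc : t < h * u <;> simp [Set.indicator, hc, mem_Iio]
      rw [heq, hμ₁, integral_indicator measurableSet_Iio,
        Measure.restrict_restrict measurableSet_Iio, setIntegral_const, smul_eq_mul]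
      have h2 : volume (Ioc (0:ℝ) (h*u)) = ENNReal.ofReal (h*u) := by
        rw [Real.volume_Ioc, sub_zero]
      have hvol : (volume (Iio (h*u) ∩ Ioc (0:ℝ) τ)).toReal ≤ h * u := by
        have hsub2 : Iio (h*u) ∩ Ioc (0:ℝ) τ ⊆ Ioc 0 (h*u) :=
          fun x hx => ⟨hx.2.1, hx.1.le⟩
        calc (volume (Iio (h*u) ∩ Ioc (0:ℝ) τ)).toReal
            ≤ (volume (Ioc (0:ℝ) (h*u))).toReal :=
              ENNReal.toReal_mono (by rw [h2]; exact ENNReal.ofReal_ne_top)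
                (measure_mono hsub2)
          _ = h * u := by
              rw [h2, ENNReal.toReal_ofReal (mul_nonneg hh.le hu.1.le)]
      calc (volume (Iio (h*u) ∩ Ioc (0:ℝ) τ)).toReal * (S * K u)
          ≤ (h * u) * (S * K u) :=
            mul_le_mul_of_nonneg_right hvol (mul_nonneg hS0 (hKnonneg u))
        _ = S * h * (u * K u) := by ring
    have hmono2 : (∫ u, (∫ t, (if t < h * u then S else 0) * K u ∂μ₁) ∂ν₂)
        ≤ ∫ u, S * h * (u * K u) ∂ν₂ := by
      apply setIntegral_mono_on ?_ ?_ measurableSet_Ioc hinner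
      · exact hprod.integral_prod_right
      · exact hKm1.const_mul (S*h)
    have hfin : (∫ u, S * h * (u * K u) ∂ν₂) = S * h * A := by
      rw [integral_const_mul]
      congr 1
      simp only [hA_def]
      exact (intervalIntegral.integral_of_le zero_le_one).symm
    linarith [hmono2]
  -- assembly
  have hrw : (∫ t in (0:ℝ)..τ, ∫ r in (0:ℝ)..t, (1 / h) * K ((t - r) / h) * g t r)
      = ∫ t in (0:ℝ)..τ, J t := by
    apply intervalIntegral.integral_congr
    intro t ht
    rw [uIcc_of_le hτ.le] at ht
    exact hsub t ht
  rw [hrw]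
  have e2 : 2 * (∫ t in (0:ℝ)..τ, J t) - (∫ t in (0:ℝ)..τ, g t t)
      = ∫ t in (0:ℝ)..τ, (2 * J t - g t t) := by
    rw [intervalIntegral.integral_sub (hJint.const_mul 2) hdiag,
      intervalIntegral.integral_const_mul]
  rw [e2]
  calc |∫ t in (0:ℝ)..τ, (2 * J t - g t t)|
      ≤ ∫ t in (0:ℝ)..τ, |2 * J t - g t t| :=
        intervalIntegral.abs_integral_le_integral_abs hτ.le
    _ ≤ ∫ t in (0:ℝ)..τ, 2 * (L * h * A + B t) := by
        apply intervalIntegral.integral_mono_on hτ.le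
          ((hJint.const_mul 2).sub hdiag).abs
          ((intervalIntegrable_const.add hBint).const_mul 2)
        intro t ht
        exact hpt t ht
    _ = 2 * (τ * (L * h * A) + ∫ t in (0:ℝ)..τ, B t) := by
        rw [intervalIntegral.integral_const_mul,
          intervalIntegral.integral_add intervalIntegrable_const hBint,
          intervalIntegral.integral_const, smul_eq_mul, sub_zero]
    _ ≤ 2 * (τ * (L * h * A) + S * h * A) := by linarith [hfub]
    _ = 2 * h * (S + τ * L) * A := by ring
end

section
/- Let τ > 0, h > 0, and let K : ℝ → ℝ be a nonnegative bounded measurable function supported in (−1,1), symmetric (K(−u)=K(u)), with 2∫₀¹ K(u) du = 1. Let g : [0,τ] × [0,τ] → ℝ be measurable and bounded, with |g(t,r₁) − g(t,r₂)| ≤ L*|r₁ − r₂| for all t, r₁, r₂ ∈ [0,τ], where L* > 0. Then |h ∫₀^τ ∫₀^t ((2/h) K((t−r)/h))² g(t,r) dr dt − 4 (∫₀¹ K(u)² du) (∫₀^τ g(t,t) dt)| ≤ 4h (sup_{t∈[0,τ]} |g(t,t)| + τ L*) ∫₀¹ u K(u)² du. -/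
set_option maxHeartbeats 1000000


open MeasureTheory Set

private lemma ii_of_bdd {f : ℝ → ℝ} {a b C : ℝ} (hab : a ≤ b)
    (hm : AEStronglyMeasurable f (volume : Measure ℝ))
    (hb : ∀ x ∈ Ioc a b, |f x| ≤ C) :
    IntervalIntegrable f volume a b := by
  rw [intervalIntegrable_iff, uIoc_of_le hab]
  refine Measure.integrableOn_of_bounded (M := C) measure_Ioc_lt_top.ne hm ?_
  filter_upwards [ae_restrict_mem measurableSet_Ioc] with x hx
  simpa [Real.norm_eq_abs] using hb x hx

/-- Kernel-squared approximation bound underlying the asymptotic variance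
computation: with `K_h(x) = (2/h) K(x/h)`, the quantity
`h ∫∫ K_h(t−r)² g(t,r) dr dt` converges at rate `h` to
`4 ∫₀¹ K(u)² du` times the diagonal integral of `g`. -/
theorem kernel_squared_bias_bound
    (τ h L : ℝ) (hτ : 0 < τ) (hh : 0 < h) (hL : 0 < L)
    (K : ℝ → ℝ) (hKmeas : Measurable K) (hKnonneg : ∀ u, 0 ≤ K u)
    (hKbdd : ∃ B, ∀ u, K u ≤ B)
    (hKsupp : ∀ u, u ∉ Set.Ioo (-1 : ℝ) 1 → K u = 0)
    (hKsymm : ∀ u, K (-u) = K u)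
    (hKint : 2 * ∫ u in (0:ℝ)..1, K u = 1)
    (g : ℝ → ℝ → ℝ) (hgmeas : Measurable (Function.uncurry g))
    (hgbdd : ∃ M, ∀ t ∈ Icc (0:ℝ) τ, ∀ r ∈ Icc (0:ℝ) τ, |g t r| ≤ M)
    (hgLip : ∀ t ∈ Icc (0:ℝ) τ, ∀ r₁ ∈ Icc (0:ℝ) τ, ∀ r₂ ∈ Icc (0:ℝ) τ,
      |g t r₁ - g t r₂| ≤ L * |r₁ - r₂|) :
    |h * (∫ t in (0:ℝ)..τ, ∫ r in (0:ℝ)..t, ((2 / h) * K ((t - r) / h)) ^ 2 * g t r)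
        - 4 * (∫ u in (0:ℝ)..1, (K u) ^ 2) * ∫ t in (0:ℝ)..τ, g t t|
      ≤ 4 * h * ((⨆ t ∈ Icc (0:ℝ) τ, |g t t|) + τ * L) *
          ∫ u in (0:ℝ)..1, u * (K u) ^ 2 := by
  obtain ⟨B, hB⟩ := hKbdd
  obtain ⟨M, hM⟩ := hgbdd
  have h0 : h ≠ 0 := hh.ne'
  have hτ0 : (0:ℝ) ≤ τ := hτ.le
  have hB0 : 0 ≤ B := le_trans (hKnonneg 0) (hB 0)
  have h00 : (0:ℝ) ∈ Icc (0:ℝ) τ := ⟨le_refl _, hτ0⟩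
  have hM0 : 0 ≤ M := le_trans (abs_nonneg _) (hM 0 h00 0 h00)
  have hK2 : ∀ u, K u ^ 2 ≤ B ^ 2 := fun u => pow_le_pow_left₀ (hKnonneg u) (hB u) 2
  have hK2n : ∀ u : ℝ, 0 ≤ K u ^ 2 := fun u => sq_nonneg _
  -- the sup S
  set S := ⨆ t ∈ Icc (0:ℝ) τ, |g t t| with hSdef
  have hbdd : BddAbove (Set.range fun t => ⨆ _ : t ∈ Icc (0:ℝ) τ, |g t t|) := by
    refine ⟨max M 0, ?_⟩
    rintro x ⟨t, rfl⟩
    show (⨆ _ : t ∈ Icc (0:ℝ) τ, |g t t|) ≤ max M 0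
    by_cases ht : t ∈ Icc (0:ℝ) τ
    · rw [ciSup_pos ht]; exact le_max_of_le_left (hM t ht t ht)
    · haveI : IsEmpty (t ∈ Icc (0:ℝ) τ) := ⟨ht⟩
      rw [Real.iSup_of_isEmpty]
      exact le_max_right _ _
  have hSle : ∀ t ∈ Icc (0:ℝ) τ, |g t t| ≤ S := by
    intro t ht
    have := le_ciSup hbdd t
    rwa [ciSup_pos ht] at this
  have hS0 : 0 ≤ S := le_trans (abs_nonneg _) (hSle 0 h00)
  -- abbreviations
  set I1 := ∫ u in (0:ℝ)..1, u * K u ^ 2 with hI1def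
  set IK2 := ∫ u in (0:ℝ)..1, K u ^ 2 with hIK2def
  set G : ℝ → ℝ → ℝ := fun t u => if 0 ≤ u ∧ h * u ≤ t then g t (t - h * u) else 0 with hGdef
  set φ : ℝ → ℝ → ℝ := fun t u => if t < h * u then K u ^ 2 else 0 with hφdef
  set F₁ : ℝ → ℝ := fun t => 4 * ∫ u in (0:ℝ)..1, K u ^ 2 * G t u with hF1def
  set F₂ : ℝ → ℝ := fun t => 4 * IK2 * g t t with hF2def
  set Ebd : ℝ → ℝ := fun t => ∫ u in (0:ℝ)..1, φ t u with hEdef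
  -- measurability facts
  have measKG : Measurable (fun p : ℝ × ℝ => K p.2 ^ 2 * G p.1 p.2) := by
    apply ((hKmeas.comp measurable_snd).pow_const 2).mul
    apply Measurable.ite
    · exact (measurableSet_le measurable_const measurable_snd).inter
        (measurableSet_le (measurable_snd.const_mul h) measurable_fst)
    · exact hgmeas.comp (measurable_fst.prodMk
        (measurable_fst.sub (measurable_snd.const_mul h)))
    · exact measurable_const
  have measφ : Measurable (fun p : ℝ × ℝ => φ p.1 p.2) := by
    apply Measurable.ite
    · exact measurableSet_lt measurable_fst (measurable_snd.const_mul h)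
    · exact ((hKmeas.comp measurable_snd).pow_const 2)
    · exact measurable_const
  have measKGu : ∀ t, Measurable (fun u => K u ^ 2 * G t u) := fun t =>
    measKG.comp (measurable_const.prodMk measurable_id)
  have measφu : ∀ t, Measurable (fun u => φ t u) := fun t =>
    measφ.comp (measurable_const.prodMk measurable_id)
  have measdiag : Measurable (fun t => g t t) :=
    hgmeas.comp (measurable_id.prodMk measurable_id)
  have measorig : ∀ t, Measurable (fun u => K u ^ 2 * g t (t - h * u)) := fun t =>
    (hKmeas.pow_const 2).mul (hgmeas.comp (measurable_const.prodMk
      (measurable_const.sub (measurable_id.const_mul h))))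
  -- bounds
  have hbndKG : ∀ t ∈ Icc (0:ℝ) τ, ∀ u, |K u ^ 2 * G t u| ≤ B ^ 2 * M := by
    intro t ht u
    by_cases hc : 0 ≤ u ∧ h * u ≤ t
    · have h1 : 0 ≤ h * u := mul_nonneg hh.le hc.1
      have hmem : t - h * u ∈ Icc (0:ℝ) τ :=
        ⟨by linarith [hc.2], by linarith [ht.2]⟩
      simp only [hGdef, if_pos hc]
      rw [abs_mul, abs_of_nonneg (hK2n u)]
      exact mul_le_mul (hK2 u) (hM t ht _ hmem) (abs_nonneg _) (sq_nonneg B)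
    · simp only [hGdef, if_neg hc, mul_zero, abs_zero]
      positivity
  have hbndφ : ∀ t u, |φ t u| ≤ B ^ 2 := by
    intro t u
    simp only [hφdef]
    by_cases hc : t < h * u
    · simp only [if_pos hc]; rw [abs_of_nonneg (hK2n u)]; exact hK2 u
    · simp only [if_neg hc, abs_zero]; positivity
  -- interval integrability in u
  have iiKG : ∀ t ∈ Icc (0:ℝ) τ, ∀ a b : ℝ, a ≤ b →
      IntervalIntegrable (fun u => K u ^ 2 * G t u) volume a b := by
    intro t ht a b hab
    exact ii_of_bdd hab (measKGu t).aestronglyMeasurable (fun x _ => hbndKG t ht x)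
  -- Step 1 : substitution + truncation
  have key : ∀ t ∈ Icc (0:ℝ) τ,
      h * ∫ r in (0:ℝ)..t, ((2 / h) * K ((t - r) / h)) ^ 2 * g t r = F₁ t := by
    intro t ht
    -- substitution
    have e1 : (∫ r in (0:ℝ)..t, ((2 / h) * K ((t - r) / h)) ^ 2 * g t r)
        = ∫ x in (0:ℝ)..t, ((2 / h) * K (x / h)) ^ 2 * g t (t - x) := by
      have := intervalIntegral.integral_comp_sub_left (a := 0) (b := t)
        (fun x => ((2 / h) * K (x / h)) ^ 2 * g t (t - x)) t
      simp only [sub_self, sub_zero, sub_sub_cancel] at this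
      rw [← this]
    have e2 : (∫ x in (0:ℝ)..t, ((2 / h) * K (x / h)) ^ 2 * g t (t - x))
        = h * ∫ u in (0:ℝ)..(t/h), ((2 / h) * K u) ^ 2 * g t (t - h * u) := by
      have := intervalIntegral.integral_comp_div (a := 0) (b := t)
        (f := fun u => ((2 / h) * K u) ^ 2 * g t (t - h * u)) h0
      simp only [zero_div, smul_eq_mul] at this
      rw [← this]
      congr 1; funext x
      rw [mul_div_cancel₀ x h0]
    have e3 : h * (∫ r in (0:ℝ)..t, ((2 / h) * K ((t - r) / h)) ^ 2 * g t r)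
        = 4 * ∫ u in (0:ℝ)..(t/h), K u ^ 2 * g t (t - h * u) := by
      rw [e1, e2]
      rw [show (∫ u in (0:ℝ)..(t/h), ((2 / h) * K u) ^ 2 * g t (t - h * u))
          = ∫ u in (0:ℝ)..(t/h), (4 / h^2) * (K u ^ 2 * g t (t - h * u)) by
        congr 1; funext u; ring]
      rw [intervalIntegral.integral_const_mul]
      field_simp
    rw [e3]
    simp only [hF1def]
    -- truncation: ∫₀^{t/h} orig = ∫₀^1 K² G
    have hc0 : 0 ≤ t / h := div_nonneg ht.1 hh.le
    have hhc : h * (t / h) = t := by field_simp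
    congr 1
    by_cases hc1 : t / h ≤ 1
    · -- t/h ≤ 1
      have eA : (∫ u in (0:ℝ)..(t/h), K u ^ 2 * g t (t - h * u))
          = ∫ u in (0:ℝ)..(t/h), K u ^ 2 * G t u := by
        apply intervalIntegral.integral_congr
        intro u hu
        rw [uIcc_of_le hc0] at hu
        have hcond : 0 ≤ u ∧ h * u ≤ t := by
          refine ⟨hu.1, ?_⟩
          calc h * u ≤ h * (t / h) := by
                exact mul_le_mul_of_nonneg_left hu.2 hh.le
            _ = t := hhc
        simp only [hGdef, if_pos hcond]
      have eB : (∫ u in (t/h)..1, K u ^ 2 * G t u) = 0 := by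
        rw [← intervalIntegral.integral_zero (a := t/h) (b := (1:ℝ)) (μ := volume)]
        apply intervalIntegral.integral_congr_ae
        filter_upwards with u hu
        rw [uIoc_of_le hc1] at hu
        have : ¬ (0 ≤ u ∧ h * u ≤ t) := by
          rintro ⟨-, h2⟩
          have : h * (t/h) < h * u := mul_lt_mul_of_pos_left hu.1 hh
          rw [hhc] at this; linarith
        simp only [hGdef, if_neg this, mul_zero]
      have := intervalIntegral.integral_add_adjacent_intervals
        (iiKG t ht 0 (t/h) hc0) (iiKG t ht (t/h) 1 hc1)
      rw [eA, ← this, eB, add_zero]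
    · -- 1 < t/h
      push_neg at hc1
      have h1c : (1:ℝ) ≤ t / h := hc1.le
      have hbnd_orig : ∀ u, u ∈ Ioc (0:ℝ) (t/h) → |K u ^ 2 * g t (t - h * u)| ≤ B ^ 2 * M := by
        intro u hu
        by_cases hKu : K u = 0
        · rw [hKu]; simp; positivity
        · have hu1 : u < 1 := by
            by_contra hge
            exact hKu (hKsupp u (fun hmem => absurd hmem.2 (not_lt.mpr (le_of_not_gt hge))))
          have h1 : 0 ≤ h * u := mul_nonneg hh.le hu.1.le
          have h2 : h * u ≤ t := by
            calc h * u ≤ h * (t/h) := mul_le_mul_of_nonneg_left hu.2 hh.le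
              _ = t := hhc
          have hmem : t - h * u ∈ Icc (0:ℝ) τ := ⟨by linarith, by linarith [ht.2]⟩
          rw [abs_mul, abs_of_nonneg (hK2n u)]
          exact mul_le_mul (hK2 u) (hM t ht _ hmem) (abs_nonneg _) (sq_nonneg B)
      have ii1 : IntervalIntegrable (fun u => K u ^ 2 * g t (t - h * u)) volume 0 1 :=
        ii_of_bdd zero_le_one (measorig t).aestronglyMeasurable
          (fun x hx => hbnd_orig x ⟨hx.1, le_trans hx.2 h1c⟩)
      have ii2 : IntervalIntegrable (fun u => K u ^ 2 * g t (t - h * u)) volume 1 (t/h) :=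
        ii_of_bdd h1c (measorig t).aestronglyMeasurable
          (fun x hx => hbnd_orig x ⟨lt_of_lt_of_le one_pos hx.1.le, hx.2⟩)
      have eC : (∫ u in (1:ℝ)..(t/h), K u ^ 2 * g t (t - h * u)) = 0 := by
        rw [← intervalIntegral.integral_zero (a := (1:ℝ)) (b := t/h) (μ := volume)]
        apply intervalIntegral.integral_congr_ae
        filter_upwards with u hu
        rw [uIoc_of_le h1c] at hu
        have : K u = 0 := hKsupp u (fun hmem => absurd hmem.2 (not_lt.mpr hu.1.le))
        rw [this]; ring
      have eD : (∫ u in (0:ℝ)..1, K u ^ 2 * g t (t - h * u))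
          = ∫ u in (0:ℝ)..1, K u ^ 2 * G t u := by
        apply intervalIntegral.integral_congr
        intro u hu
        rw [uIcc_of_le zero_le_one] at hu
        have hcond : 0 ≤ u ∧ h * u ≤ t := by
          refine ⟨hu.1, ?_⟩
          calc h * u ≤ h * (t/h) :=
                mul_le_mul_of_nonneg_left (le_trans hu.2 h1c) hh.le
            _ = t := hhc
        simp only [hGdef, if_pos hcond]
      have := intervalIntegral.integral_add_adjacent_intervals ii1 ii2
      rw [← this, eC, add_zero, eD]
  -- F₁ measurable and bounded on [0,τ]
  have measF1 : Measurable F₁ := by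
    have : Measurable (fun t => ∫ u in Ioc (0:ℝ) 1, K u ^ 2 * G t u) :=
      (measKG.stronglyMeasurable.integral_prod_right').measurable
    have e : F₁ = fun t => 4 * ∫ u in Ioc (0:ℝ) 1, K u ^ 2 * G t u := by
      funext t
      simp only [hF1def, intervalIntegral.integral_of_le zero_le_one]
    rw [e]
    exact this.const_mul 4
  have measE : Measurable Ebd := by
    have : Measurable (fun t => ∫ u in Ioc (0:ℝ) 1, φ t u) :=
      (measφ.stronglyMeasurable.integral_prod_right').measurable
    have e : Ebd = fun t => ∫ u in Ioc (0:ℝ) 1, φ t u := by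
      funext t
      simp only [hEdef, intervalIntegral.integral_of_le zero_le_one]
    rw [e]; exact this
  have hF1bnd : ∀ t ∈ Icc (0:ℝ) τ, |F₁ t| ≤ 4 * (B ^ 2 * M) := by
    intro t ht
    simp only [hF1def]
    rw [abs_mul, abs_of_nonneg (by norm_num : (0:ℝ) ≤ 4)]
    have : |∫ u in (0:ℝ)..1, K u ^ 2 * G t u| ≤ |∫ u in (0:ℝ)..1, (B ^ 2 * M : ℝ)| := by
      rw [← Real.norm_eq_abs (∫ u in (0:ℝ)..1, K u ^ 2 * G t u)]
      apply intervalIntegral.norm_integral_le_abs_of_norm_le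
      · filter_upwards with u
        rw [Real.norm_eq_abs]; exact hbndKG t ht u
      · exact intervalIntegrable_const
    refine le_trans (mul_le_mul_of_nonneg_left this (by norm_num)) ?_
    rw [intervalIntegral.integral_const]
    simp [abs_of_nonneg (by positivity : (0:ℝ) ≤ B ^ 2 * M)]
  have hEbnd : ∀ t, |Ebd t| ≤ B ^ 2 := by
    intro t
    simp only [hEdef]
    have : |∫ u in (0:ℝ)..1, φ t u| ≤ |∫ u in (0:ℝ)..1, (B ^ 2 : ℝ)| := by
      rw [← Real.norm_eq_abs (∫ u in (0:ℝ)..1, φ t u)]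
      apply intervalIntegral.norm_integral_le_abs_of_norm_le
      · filter_upwards with u
        rw [Real.norm_eq_abs]; exact hbndφ t u
      · exact intervalIntegrable_const
    refine le_trans this ?_
    rw [intervalIntegral.integral_const]
    simp [abs_of_nonneg (by positivity : (0:ℝ) ≤ B ^ 2)]
  -- interval integrability in t on [0,τ]
  have iiF1 : IntervalIntegrable F₁ volume 0 τ :=
    ii_of_bdd hτ0 measF1.aestronglyMeasurable
      (fun t htm => hF1bnd t ⟨htm.1.le, htm.2⟩)
  have iiF2 : IntervalIntegrable F₂ volume 0 τ := by
    apply ii_of_bdd (C := |4 * IK2| * M) hτ0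
      ((measdiag.const_mul (4 * IK2)).aestronglyMeasurable)
    intro t htm
    show |4 * IK2 * g t t| ≤ _
    rw [abs_mul]
    exact mul_le_mul_of_nonneg_left (hM t ⟨htm.1.le, htm.2⟩ t ⟨htm.1.le, htm.2⟩) (abs_nonneg _)
  have iiE : IntervalIntegrable Ebd volume 0 τ :=
    ii_of_bdd hτ0 measE.aestronglyMeasurable (fun t _ => hEbnd t)
  -- per-t bound
  have hEnn : ∀ t, 0 ≤ Ebd t := by
    intro t
    simp only [hEdef]
    apply intervalIntegral.integral_nonneg zero_le_one
    intro u _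
    simp only [hφdef]
    by_cases hc : t < h * u
    · simp only [if_pos hc]; positivity
    · simp only [if_neg hc]; exact le_refl _
  have iiuK2 : IntervalIntegrable (fun u => L * h * (u * K u ^ 2)) volume 0 1 := by
    apply ii_of_bdd (C := L * h * B ^ 2) zero_le_one
      (((measurable_id.mul (hKmeas.pow_const 2)).const_mul (L * h)).aestronglyMeasurable)
    intro u hu
    simp only [Pi.mul_apply, id_eq]
    have h1 : 0 ≤ u * K u ^ 2 := mul_nonneg hu.1.le (hK2n u)
    have h2 : u * K u ^ 2 ≤ B ^ 2 := by nlinarith [hK2 u, hK2n u, hu.1.le, hu.2]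
    rw [abs_of_nonneg (mul_nonneg (mul_nonneg hL.le hh.le) h1)]
    exact mul_le_mul_of_nonneg_left h2 (mul_nonneg hL.le hh.le)
  have iiSφ : ∀ t : ℝ, IntervalIntegrable (fun u => S * φ t u) volume 0 1 := by
    intro t
    apply ii_of_bdd (C := S * B ^ 2) zero_le_one
      (((measφu t).const_mul S).aestronglyMeasurable)
    intro u _
    rw [abs_mul, abs_of_nonneg hS0]
    exact mul_le_mul_of_nonneg_left (hbndφ t u) hS0
  have perT : ∀ t ∈ Icc (0:ℝ) τ, |F₁ t - F₂ t| ≤ 4 * (L * h * I1 + S * Ebd t) := by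
    intro t ht
    have e2 : F₂ t = 4 * ∫ u in (0:ℝ)..1, K u ^ 2 * g t t := by
      simp only [hF2def]
      rw [intervalIntegral.integral_mul_const, ← hIK2def]; ring
    have iig : IntervalIntegrable (fun u => K u ^ 2 * g t t) volume 0 1 := by
      apply ii_of_bdd (C := B ^ 2 * |g t t|) zero_le_one
        (((hKmeas.pow_const 2).mul_const (g t t)).aestronglyMeasurable)
      intro u _
      rw [abs_mul, abs_of_nonneg (hK2n u)]
      exact mul_le_mul_of_nonneg_right (hK2 u) (abs_nonneg _)
    have ediff : F₁ t - F₂ t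
        = 4 * ∫ u in (0:ℝ)..1, (K u ^ 2 * G t u - K u ^ 2 * g t t) := by
      simp only [hF1def]
      rw [e2, intervalIntegral.integral_sub (iiKG t ht 0 1 zero_le_one) iig]
      ring
    rw [ediff, abs_mul, abs_of_nonneg (by norm_num : (0:ℝ) ≤ 4)]
    have hb : |∫ u in (0:ℝ)..1, (K u ^ 2 * G t u - K u ^ 2 * g t t)|
        ≤ |∫ u in (0:ℝ)..1, (L * h * (u * K u ^ 2) + S * φ t u)| := by
      rw [← Real.norm_eq_abs (∫ u in (0:ℝ)..1, (K u ^ 2 * G t u - K u ^ 2 * g t t))]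
      apply intervalIntegral.norm_integral_le_abs_of_norm_le
      · rw [uIoc_of_le zero_le_one]
        filter_upwards [ae_restrict_mem measurableSet_Ioc] with u hu
        rw [Real.norm_eq_abs, ← mul_sub, abs_mul, abs_of_nonneg (hK2n u)]
        by_cases hc : 0 ≤ u ∧ h * u ≤ t
        · have hmem : t - h * u ∈ Icc (0:ℝ) τ :=
            ⟨by linarith [hc.2], by linarith [mul_nonneg hh.le hc.1, ht.2]⟩
          have hlip := hgLip t ht (t - h * u) hmem t ht
          have : |G t u - g t t| ≤ L * (h * u) := by
            simp only [hGdef, if_pos hc]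
            calc |g t (t - h * u) - g t t| ≤ L * |t - h * u - t| := hlip
              _ = L * (h * u) := by
                  rw [show t - h * u - t = -(h * u) by ring, abs_neg,
                    abs_of_nonneg (mul_nonneg hh.le hc.1)]
          calc K u ^ 2 * |G t u - g t t| ≤ K u ^ 2 * (L * (h * u)) :=
                mul_le_mul_of_nonneg_left this (hK2n u)
            _ ≤ L * h * (u * K u ^ 2) + S * φ t u := by
                have : 0 ≤ S * φ t u := by
                  apply mul_nonneg hS0
                  simp only [hφdef]
                  by_cases hd : t < h * u
                  · simp only [if_pos hd]; positivity
                  · simp only [if_neg hd]; exact le_refl _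
                nlinarith [hK2n u]
        · have hlt : t < h * u := by
            rcases not_and_or.mp hc with h1 | h2
            · exact absurd hu.1.le h1
            · exact lt_of_not_ge h2
          have eφ : φ t u = K u ^ 2 := by simp only [hφdef, if_pos hlt]
          have eG : G t u = 0 := by simp only [hGdef, if_neg hc]
          rw [eG, zero_sub, abs_neg]
          calc K u ^ 2 * |g t t| ≤ K u ^ 2 * S :=
              mul_le_mul_of_nonneg_left (hSle t ht) (hK2n u)
            _ ≤ L * h * (u * K u ^ 2) + S * φ t u := by
                rw [eφ]
                nlinarith [hK2n u, hu.1.le, mul_nonneg (mul_nonneg hL.le hh.le)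
                  (mul_nonneg hu.1.le (hK2n u))]
      · exact iiuK2.add (iiSφ t)
    have hsum : (∫ u in (0:ℝ)..1, (L * h * (u * K u ^ 2) + S * φ t u))
        = L * h * I1 + S * Ebd t := by
      rw [intervalIntegral.integral_add iiuK2 (iiSφ t),
        intervalIntegral.integral_const_mul, intervalIntegral.integral_const_mul]
      try rw [← hI1def]
      try simp only [hEdef]
    have habs : |L * h * I1 + S * Ebd t| = L * h * I1 + S * Ebd t := by
      apply abs_of_nonneg
      have hI1nn : 0 ≤ I1 := by
        rw [hI1def]
        apply intervalIntegral.integral_nonneg zero_le_one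
        intro u hu
        exact mul_nonneg hu.1 (hK2n u)
      have := hEnn t
      positivity
    rw [hsum, habs] at hb
    exact mul_le_mul_of_nonneg_left hb (by norm_num)
  -- Fubini: ∫₀^τ Ebd ≤ h * I1
  have hI1nn : 0 ≤ I1 := by
    rw [hI1def]
    apply intervalIntegral.integral_nonneg zero_le_one
    intro u hu
    exact mul_nonneg hu.1 (hK2n u)
  have fubini : (∫ t in (0:ℝ)..τ, Ebd t) ≤ h * I1 := by
    have hint : Integrable (Function.uncurry φ) ((volume.restrict (Ioc (0:ℝ) τ)).prod (volume.restrict (Ioc (0:ℝ) 1))) := by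
      apply Integrable.mono' (integrable_const (B ^ 2))
        (measφ.aestronglyMeasurable)
      filter_upwards with p
      rw [Real.norm_eq_abs]
      exact hbndφ p.1 p.2
    have hswap := integral_integral_swap hint
    have e1 : (∫ t in (0:ℝ)..τ, Ebd t) = ∫ t, (∫ u, φ t u ∂(volume.restrict (Ioc (0:ℝ) 1))) ∂(volume.restrict (Ioc (0:ℝ) τ)) := by
      rw [intervalIntegral.integral_of_le hτ0]
      apply setIntegral_congr_fun measurableSet_Ioc
      intro t _
      simp only [hEdef, intervalIntegral.integral_of_le zero_le_one]
    rw [e1, hswap]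
    -- inner integral bound
    have hinner : ∀ u ∈ Ioc (0:ℝ) 1, (∫ t, φ t u ∂(volume.restrict (Ioc (0:ℝ) τ))) ≤ h * (u * K u ^ 2) := by
      intro u hu
      have e2 : (fun t => φ t u) = (Iio (h * u)).indicator (fun _ => K u ^ 2) := by
        funext t
        rw [hφdef, Set.indicator_apply]
        simp only [mem_Iio]
      have e3 : (∫ t, φ t u ∂(volume.restrict (Ioc (0:ℝ) τ)))
          = (volume (Iio (h * u) ∩ Ioc 0 τ)).toReal * K u ^ 2 := by
        rw [e2, MeasureTheory.integral_indicator measurableSet_Iio,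
          Measure.restrict_restrict measurableSet_Iio, setIntegral_const, smul_eq_mul]
        rfl
      rw [e3]
      have hsub : Iio (h * u) ∩ Ioc 0 τ ⊆ Ioo 0 (h * u) := by
        rintro t ⟨ht1, ht2, _⟩
        exact ⟨ht2, ht1⟩
      have hmle : volume (Iio (h * u) ∩ Ioc 0 τ) ≤ ENNReal.ofReal (h * u) := by
        calc volume (Iio (h * u) ∩ Ioc 0 τ) ≤ volume (Ioo 0 (h * u)) := measure_mono hsub
          _ = ENNReal.ofReal (h * u - 0) := Real.volume_Ioo
          _ = ENNReal.ofReal (h * u) := by rw [sub_zero]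
      have htoReal : (volume (Iio (h * u) ∩ Ioc 0 τ)).toReal ≤ h * u := by
        have := ENNReal.toReal_mono ENNReal.ofReal_ne_top hmle
        rwa [ENNReal.toReal_ofReal (mul_nonneg hh.le hu.1.le)] at this
      calc (volume (Iio (h * u) ∩ Ioc 0 τ)).toReal * K u ^ 2
          ≤ (h * u) * K u ^ 2 := mul_le_mul_of_nonneg_right htoReal (hK2n u)
        _ = h * (u * K u ^ 2) := by ring
    have hintleft : Integrable (fun u => ∫ t, φ t u ∂(volume.restrict (Ioc (0:ℝ) τ))) (volume.restrict (Ioc (0:ℝ) 1)) := by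
      exact hint.integral_prod_right
    have hintright : Integrable (fun u : ℝ => h * (u * K u ^ 2)) (volume.restrict (Ioc (0:ℝ) 1)) := by
      apply Integrable.mono' (integrable_const (h * B ^ 2))
        (((measurable_id.mul (hKmeas.pow_const 2)).const_mul h).aestronglyMeasurable)
      filter_upwards [ae_restrict_mem measurableSet_Ioc] with u hu
      simp only [Pi.mul_apply, id_eq]
      have h1 : 0 ≤ u * K u ^ 2 := mul_nonneg hu.1.le (hK2n u)
      have h2 : u * K u ^ 2 ≤ B ^ 2 := by nlinarith [hK2 u, hK2n u, hu.1.le, hu.2]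
      rw [Real.norm_eq_abs, abs_of_nonneg (mul_nonneg hh.le h1)]
      exact mul_le_mul_of_nonneg_left h2 hh.le
    calc (∫ u, (∫ t, φ t u ∂(volume.restrict (Ioc (0:ℝ) τ))) ∂(volume.restrict (Ioc (0:ℝ) 1))) ≤ ∫ u, h * (u * K u ^ 2) ∂(volume.restrict (Ioc (0:ℝ) 1)) := by
          exact setIntegral_mono_on hintleft hintright measurableSet_Ioc hinner
      _ = h * I1 := by
          rw [MeasureTheory.integral_const_mul, hI1def,
            intervalIntegral.integral_of_le zero_le_one]
  -- assemble
  have lhs_eq : h * (∫ t in (0:ℝ)..τ, ∫ r in (0:ℝ)..t, ((2 / h) * K ((t - r) / h)) ^ 2 * g t r)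
      - 4 * IK2 * (∫ t in (0:ℝ)..τ, g t t)
      = ∫ t in (0:ℝ)..τ, (F₁ t - F₂ t) := by
    rw [intervalIntegral.integral_sub iiF1 iiF2]
    congr 1
    · rw [← intervalIntegral.integral_const_mul]
      apply intervalIntegral.integral_congr
      intro t htm
      rw [uIcc_of_le hτ0] at htm
      exact key t htm
    · simp only [hF2def]
      rw [← intervalIntegral.integral_const_mul]
  rw [lhs_eq]
  have hbound : |∫ t in (0:ℝ)..τ, (F₁ t - F₂ t)|
      ≤ |∫ t in (0:ℝ)..τ, 4 * (L * h * I1 + S * Ebd t)| := by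
    rw [← Real.norm_eq_abs (∫ t in (0:ℝ)..τ, (F₁ t - F₂ t))]
    apply intervalIntegral.norm_integral_le_abs_of_norm_le
    · rw [uIoc_of_le hτ0]
      filter_upwards [ae_restrict_mem measurableSet_Ioc] with t htm
      rw [Real.norm_eq_abs]
      exact perT t ⟨htm.1.le, htm.2⟩
    · exact (intervalIntegrable_const.add (iiE.const_mul S)).const_mul 4
  have hval : (∫ t in (0:ℝ)..τ, 4 * (L * h * I1 + S * Ebd t))
      = 4 * (L * h * I1 * τ + S * ∫ t in (0:ℝ)..τ, Ebd t) := by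
    rw [intervalIntegral.integral_const_mul, intervalIntegral.integral_add
      intervalIntegrable_const (iiE.const_mul S), intervalIntegral.integral_const,
      intervalIntegral.integral_const_mul]
    simp only [smul_eq_mul, sub_zero]
    ring
  have hfinal : (∫ t in (0:ℝ)..τ, 4 * (L * h * I1 + S * Ebd t))
      ≤ 4 * h * (S + τ * L) * I1 := by
    rw [hval]
    have : S * (∫ t in (0:ℝ)..τ, Ebd t) ≤ S * (h * I1) :=
      mul_le_mul_of_nonneg_left fubini hS0
    nlinarith
  have habs2 : |∫ t in (0:ℝ)..τ, 4 * (L * h * I1 + S * Ebd t)|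
      = ∫ t in (0:ℝ)..τ, 4 * (L * h * I1 + S * Ebd t) := by
    apply abs_of_nonneg
    rw [hval]
    have h1 : 0 ≤ ∫ t in (0:ℝ)..τ, Ebd t := by
      apply intervalIntegral.integral_nonneg hτ0
      intro t _
      exact hEnn t
    positivity
  calc |∫ t in (0:ℝ)..τ, (F₁ t - F₂ t)|
      ≤ |∫ t in (0:ℝ)..τ, 4 * (L * h * I1 + S * Ebd t)| := hbound
    _ = ∫ t in (0:ℝ)..τ, 4 * (L * h * I1 + S * Ebd t) := habs2
    _ ≤ 4 * h * (S + τ * L) * I1 := hfinal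
end

section
/- Let τ > 0, L > 0, and let f : [0,τ] → ℝ be Lipschitz continuous with constant L. If sup_{t∈[0,τ]} |f(t)| ≤ Lτ/2, then (sup_{t∈[0,τ]} |f(t)|)³ ≤ 3L ∫₀^τ f(t)² dt; in particular, sup_{t∈[0,τ]} |f(t)| ≤ (3L)^{1/3} (∫₀^τ f(t)² dt)^{1/3}, i.e. the supremum norm of f is bounded by a constant times the 2/3 power of its L² norm. -/
open MeasureTheory Set

lemma integral_ramp (L M c : ℝ) (hL : 0 < L) :
    ∫ t in c..(c + M/L), (M - L*(t - c))^2 = M^3/(3*L) := by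
  have hL' : L ≠ 0 := hL.ne'
  have h : ∀ t ∈ uIcc c (c + M/L),
      HasDerivAt (fun t => -(M - L*(t - c))^3 / (3*L)) ((M - L*(t - c))^2) t := by
    intro t _
    have h1 : HasDerivAt (fun t => M - L*(t - c)) (-L) t := by
      simpa using (((hasDerivAt_id t).sub_const c).const_mul L).const_sub M
    have h2 := (h1.pow 3).neg.div_const (3*L)
    refine h2.congr_deriv ?_
    field_simp
    ring
  have hcont : IntervalIntegrable (fun t => (M - L*(t - c))^2) volume c (c + M/L) := by
    apply Continuous.intervalIntegrable
    fun_prop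
  rw [intervalIntegral.integral_eq_sub_of_hasDerivAt h hcont]
  field_simp
  ring

lemma integral_ramp' (L M c : ℝ) (hL : 0 < L) :
    ∫ t in (c - M/L)..c, (M + L*(t - c))^2 = M^3/(3*L) := by
  have hL' : L ≠ 0 := hL.ne'
  have h : ∀ t ∈ uIcc (c - M/L) c,
      HasDerivAt (fun t => (M + L*(t - c))^3 / (3*L)) ((M + L*(t - c))^2) t := by
    intro t _
    have h1 : HasDerivAt (fun t => M + L*(t - c)) L t := by
      simpa using (((hasDerivAt_id t).sub_const c).const_mul L).const_add M
    have h2 := (h1.pow 3).div_const (3*L)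
    refine h2.congr_deriv ?_
    field_simp
    ring
  have hcont : IntervalIntegrable (fun t => (M + L*(t - c))^2) volume (c - M/L) c := by
    apply Continuous.intervalIntegrable
    fun_prop
  rw [intervalIntegral.integral_eq_sub_of_hasDerivAt h hcont]
  field_simp
  ring

/-- Analytic core of Lemma 4: for a Lipschitz function on `[0,τ]` whose sup-norm
is at most `Lτ/2`, the cube of the sup-norm is bounded by `3L` times the
squared L²-norm; in particular the sup-norm is bounded by a constant times the
`2/3` power of the L²-norm. -/
theorem sup_norm_le_L2_twothirds
    (τ L : ℝ) (hτ : 0 < τ) (hL : 0 < L) (f : ℝ → ℝ)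
    (hLip : ∀ s ∈ Icc (0:ℝ) τ, ∀ t ∈ Icc (0:ℝ) τ, |f s - f t| ≤ L * |s - t|)
    (hsup : (⨆ t ∈ Icc (0:ℝ) τ, |f t|) ≤ L * τ / 2) :
    (⨆ t ∈ Icc (0:ℝ) τ, |f t|) ^ 3 ≤ 3 * L * ∫ t in (0:ℝ)..τ, (f t) ^ 2
      ∧ (⨆ t ∈ Icc (0:ℝ) τ, |f t|)
          ≤ (3 * L) ^ ((1:ℝ)/3) * (∫ t in (0:ℝ)..τ, (f t) ^ 2) ^ ((1:ℝ)/3) := by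
  set M := ⨆ t ∈ Icc (0:ℝ) τ, |f t| with hMdef
  set I := ∫ t in (0:ℝ)..τ, (f t) ^ 2 with hIdef
  have hcont : ContinuousOn f (Icc 0 τ) := by
    have hl : LipschitzOnWith ⟨L, hL.le⟩ f (Icc 0 τ) := by
      refine lipschitzOnWith_iff_dist_le_mul.2 ?_
      intro x hx y hy
      exact hLip x hx y hy
    exact hl.continuousOn
  obtain ⟨t₀, ht₀, hmax⟩ := isCompact_Icc.exists_isMaxOn (nonempty_Icc.mpr hτ.le)
      (continuous_abs.comp_continuousOn hcont)
  have hmax' : ∀ t ∈ Icc (0:ℝ) τ, |f t| ≤ |f t₀| := fun t ht => hmax ht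
  have hMeq : M = |f t₀| := by
    apply le_antisymm
    · exact Real.iSup_le
        (fun t => Real.iSup_le (fun ht => hmax' t ht) (abs_nonneg _)) (abs_nonneg _)
    · have hbdd : BddAbove (Set.range fun t => ⨆ _ : t ∈ Icc (0:ℝ) τ, |f t|) := by
        refine ⟨|f t₀|, ?_⟩
        rintro x ⟨t, rfl⟩
        exact Real.iSup_le (fun ht => hmax' t ht) (abs_nonneg _)
      calc |f t₀| = ⨆ _ : t₀ ∈ Icc (0:ℝ) τ, |f t₀| :=
            (ciSup_pos (f := fun _ => |f t₀|) ht₀).symm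
        _ ≤ M := le_ciSup hbdd t₀
  have hM0 : 0 ≤ M := hMeq ▸ abs_nonneg _
  have hfi : IntervalIntegrable (fun t => (f t)^2) volume 0 τ := by
    apply ContinuousOn.intervalIntegrable
    rw [uIcc_of_le hτ.le]
    exact hcont.pow 2
  have hr : M / L ≤ τ / 2 := by
    rw [div_le_div_iff₀ hL (by norm_num)]
    linarith [hsup]
  have hr0 : 0 ≤ M / L := div_nonneg hM0 hL.le
  -- key inequality
  have hkey : M^3 / (3*L) ≤ I := by
    rcases le_or_gt t₀ (τ/2) with hc | hc
    · -- use [t₀, t₀ + M/L]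
      set a := t₀ with ha
      set b := t₀ + M/L with hb
      have hab : a ≤ b := by simp [ha, hb]; linarith
      have ha0 : (0:ℝ) ≤ a := ht₀.1
      have hbτ : b ≤ τ := by simp only [hb]; linarith
      have hpt : ∀ t ∈ Icc a b, (M - L*(t - t₀))^2 ≤ (f t)^2 := by
        intro t ht
        have htmem : t ∈ Icc (0:ℝ) τ := ⟨le_trans ha0 ht.1, le_trans ht.2 hbτ⟩
        have h3 : L * (t - t₀) ≤ M := by
          have h4 : t - t₀ ≤ M / L := by
            have := ht.2; simp only [hb] at this; linarith
          calc L * (t - t₀) ≤ L * (M/L) := by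
                exact mul_le_mul_of_nonneg_left h4 hL.le
            _ = M := by field_simp
        have h5 : M - L*(t - t₀) ≤ |f t| := by
          have hlp := hLip t₀ ht₀ t htmem
          have habs : |t₀ - t| = t - t₀ := by
            rw [abs_sub_comm]; exact abs_of_nonneg (by linarith [ht.1])
          have h6 : |f t₀| - |f t| ≤ |f t₀ - f t| := abs_sub_abs_le_abs_sub _ _
          rw [habs] at hlp
          rw [hMeq]
          linarith
        have h7 : (0:ℝ) ≤ M - L*(t - t₀) := by linarith
        calc (M - L*(t - t₀))^2 ≤ |f t|^2 := pow_le_pow_left₀ h7 h5 2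
          _ = (f t)^2 := sq_abs _
      have hgint : IntervalIntegrable (fun t => (M - L*(t - t₀))^2) volume a b := by
        apply Continuous.intervalIntegrable; fun_prop
      have hfint : IntervalIntegrable (fun t => (f t)^2) volume a b :=
        hfi.mono_set (by
          rw [uIcc_of_le hab, uIcc_of_le hτ.le]
          exact Icc_subset_Icc ha0 hbτ)
      calc M^3/(3*L) = ∫ t in a..b, (M - L*(t - t₀))^2 := (integral_ramp L M t₀ hL).symm
        _ ≤ ∫ t in a..b, (f t)^2 :=
            intervalIntegral.integral_mono_on hab hgint hfint hpt
        _ ≤ I := intervalIntegral.integral_mono_interval ha0 hab hbτ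
            (Filter.Eventually.of_forall fun t => sq_nonneg _) hfi
    · -- use [t₀ - M/L, t₀]
      set a := t₀ - M/L with ha
      set b := t₀ with hb
      have hab : a ≤ b := by simp only [ha, hb]; linarith
      have ha0 : (0:ℝ) ≤ a := by simp only [ha]; linarith
      have hbτ : b ≤ τ := ht₀.2
      have hpt : ∀ t ∈ Icc a b, (M + L*(t - t₀))^2 ≤ (f t)^2 := by
        intro t ht
        have htmem : t ∈ Icc (0:ℝ) τ := ⟨le_trans ha0 ht.1, le_trans ht.2 hbτ⟩
        have h3 : L * (t₀ - t) ≤ M := by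
          have h4 : t₀ - t ≤ M / L := by
            have := ht.1; simp only [ha] at this; linarith
          calc L * (t₀ - t) ≤ L * (M/L) := mul_le_mul_of_nonneg_left h4 hL.le
            _ = M := by field_simp
        have h5 : M + L*(t - t₀) ≤ |f t| := by
          have hlp := hLip t₀ ht₀ t htmem
          have habs : |t₀ - t| = t₀ - t := abs_of_nonneg (by linarith [ht.2])
          have h6 : |f t₀| - |f t| ≤ |f t₀ - f t| := abs_sub_abs_le_abs_sub _ _
          rw [habs] at hlp
          rw [hMeq]
          linarith
        have h7 : (0:ℝ) ≤ M + L*(t - t₀) := by linarith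
        calc (M + L*(t - t₀))^2 ≤ |f t|^2 := pow_le_pow_left₀ h7 h5 2
          _ = (f t)^2 := sq_abs _
      have hgint : IntervalIntegrable (fun t => (M + L*(t - t₀))^2) volume a b := by
        apply Continuous.intervalIntegrable; fun_prop
      have hfint : IntervalIntegrable (fun t => (f t)^2) volume a b :=
        hfi.mono_set (by
          rw [uIcc_of_le hab, uIcc_of_le hτ.le]
          exact Icc_subset_Icc ha0 hbτ)
      calc M^3/(3*L) = ∫ t in a..b, (M + L*(t - t₀))^2 := (integral_ramp' L M t₀ hL).symm
        _ ≤ ∫ t in a..b, (f t)^2 :=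
            intervalIntegral.integral_mono_on hab hgint hfint hpt
        _ ≤ I := intervalIntegral.integral_mono_interval ha0 hab hbτ
            (Filter.Eventually.of_forall fun t => sq_nonneg _) hfi
  have hI0 : 0 ≤ I :=
    le_trans (div_nonneg (pow_nonneg hM0 3) (by positivity)) hkey
  have h1 : M ^ 3 ≤ 3 * L * I := by
    rw [div_le_iff₀ (by positivity)] at hkey
    linarith
  refine ⟨h1, ?_⟩
  have h2 : (M ^ 3 : ℝ) ^ ((1:ℝ)/3) ≤ (3 * L * I) ^ ((1:ℝ)/3) :=
    Real.rpow_le_rpow (by positivity) h1 (by norm_num)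
  have h3 : (M ^ 3 : ℝ) ^ ((1:ℝ)/3) = M := by
    rw [← Real.rpow_natCast M 3, ← Real.rpow_mul hM0]
    norm_num
  have h4 : (3 * L * I) ^ ((1:ℝ)/3) = (3 * L) ^ ((1:ℝ)/3) * I ^ ((1:ℝ)/3) :=
    Real.mul_rpow (by positivity) hI0
  rw [h3, h4] at h2
  exact h2
end

section
/- Let (Ω, F, P) be a probability space, let m ⊆ F be a sub-σ-algebra, let f, g ∈ L²(P) with f measurable with respect to m, and let η ∈ [0,1]. Suppose that P-almost surely (E[g | m])² ≤ (1 − η) E[g² | m]. Then (E[f g])² ≤ (1 − η) E[f²] E[g²]. -/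
open MeasureTheory

lemma cs_integral {Ω : Type*} {F : MeasurableSpace Ω} {μ : Measure Ω}
    {f g : Ω → ℝ} (hf : MemLp f 2 μ) (hg : MemLp g 2 μ) :
    (∫ ω, f ω * g ω ∂μ) ^ 2 ≤ (∫ ω, f ω ^ 2 ∂μ) * ∫ ω, g ω ^ 2 ∂μ := by
  set Fp : Lp ℝ 2 μ := hf.toLp f
  set Gp : Lp ℝ 2 μ := hg.toLp g
  have h := real_inner_mul_inner_self_le Fp Gp
  have hFG : (inner ℝ Fp Gp : ℝ) = ∫ ω, f ω * g ω ∂μ := by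
    rw [L2.inner_def]
    refine integral_congr_ae ?_
    filter_upwards [hf.coeFn_toLp, hg.coeFn_toLp] with ω h1 h2
    simp [Fp, Gp, h1, h2, RCLike.inner_apply, mul_comm]
  have hFF : (inner ℝ Fp Fp : ℝ) = ∫ ω, f ω ^ 2 ∂μ := by
    rw [L2.inner_def]
    refine integral_congr_ae ?_
    filter_upwards [hf.coeFn_toLp] with ω h1
    simp [Fp, h1, RCLike.inner_apply, sq]
  have hGG : (inner ℝ Gp Gp : ℝ) = ∫ ω, g ω ^ 2 ∂μ := by
    rw [L2.inner_def]
    refine integral_congr_ae ?_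
    filter_upwards [hg.coeFn_toLp] with ω h1
    simp [Gp, h1, RCLike.inner_apply, sq]
  rw [hFG, hFF, hGG] at h
  nlinarith [h]
open MeasureTheory

/-- Conditional Cauchy–Schwarz step: if the conditional expectation of `g`
given the sub-σ-algebra `m` satisfies `(E[g|m])² ≤ (1−η) E[g²|m]` a.s., then
for any `m`-measurable `f ∈ L²`, `(E[fg])² ≤ (1−η) E[f²] E[g²]`. -/
theorem conditional_cauchy_schwarz
    {Ω : Type*} {F : MeasurableSpace Ω} (μ : Measure Ω) [IsProbabilityMeasure μ]
    (m : MeasurableSpace Ω) (hm : m ≤ F)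
    (f g : Ω → ℝ) (hf2 : MemLp f 2 μ) (hg2 : MemLp g 2 μ)
    (hfm : StronglyMeasurable[m] f)
    (η : ℝ) (hη : η ∈ Set.Icc (0:ℝ) 1)
    (hcond : ∀ᵐ ω ∂μ, (μ[g|m]) ω ^ 2 ≤ (1 - η) * (μ[fun ω' => g ω' ^ 2|m]) ω) :
    (∫ ω, f ω * g ω ∂μ) ^ 2
      ≤ (1 - η) * (∫ ω, f ω ^ 2 ∂μ) * ∫ ω, g ω ^ 2 ∂μ := by
  haveI : SigmaFinite (μ.trim hm) := by infer_instance
  have hη0 : (0:ℝ) ≤ 1 - η := by linarith [hη.2]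
  -- integrability of f*g
  have hfg_int : Integrable (fun ω => f ω * g ω) μ := by
    refine Integrable.mono' ((hf2.integrable_sq.add hg2.integrable_sq).div_const 2)
      (((hfm.mono hm).aestronglyMeasurable).mul hg2.aestronglyMeasurable) ?_
    filter_upwards with ω
    simp only [Real.norm_eq_abs, abs_mul, Pi.add_apply]
    nlinarith [abs_nonneg (f ω), abs_nonneg (g ω), sq_abs (f ω), sq_abs (g ω),
      sq_nonneg (|f ω| - |g ω|)]
  have hg_int : Integrable g μ := hg2.integrable one_le_two
  -- condexp of g is in L2
  have hce_sm : AEStronglyMeasurable[F] (μ[g|m]) μ :=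
    (stronglyMeasurable_condExp.mono hm).aestronglyMeasurable
  have hce_sq_int : Integrable (fun ω => (μ[g|m]) ω ^ 2) μ := by
    refine Integrable.mono' ((integrable_condExp (m := m) (f := fun ω' => g ω' ^ 2)).const_mul (1-η))
      (hce_sm.mul hce_sm |>.congr ?_) ?_
    · filter_upwards with ω; simp [sq]
    · filter_upwards [hcond] with ω hω
      rw [Real.norm_eq_abs, abs_of_nonneg (sq_nonneg _)]
      exact hω
  have hceL2 : MemLp (μ[g|m]) 2 μ := (memLp_two_iff_integrable_sq hce_sm).2 hce_sq_int
  -- ∫ f g = ∫ f * E[g|m]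
  have hpull : μ[(fun ω => f ω * g ω)|m] =ᵐ[μ] fun ω => f ω * (μ[g|m]) ω :=
    condExp_mul_of_stronglyMeasurable_left hfm hfg_int hg_int
  have hkey : ∫ ω, f ω * g ω ∂μ = ∫ ω, f ω * (μ[g|m]) ω ∂μ := by
    rw [← integral_condExp hm, integral_congr_ae hpull]
  -- ∫ (E[g|m])² ≤ (1-η) ∫ g²
  have hbound : ∫ ω, (μ[g|m]) ω ^ 2 ∂μ ≤ (1 - η) * ∫ ω, g ω ^ 2 ∂μ := by
    calc ∫ ω, (μ[g|m]) ω ^ 2 ∂μ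
        ≤ ∫ ω, (1 - η) * (μ[fun ω' => g ω' ^ 2|m]) ω ∂μ :=
          integral_mono_ae hce_sq_int ((integrable_condExp (m := m)).const_mul _) hcond
      _ = (1 - η) * ∫ ω, (μ[fun ω' => g ω' ^ 2|m]) ω ∂μ := integral_const_mul _ _
      _ = (1 - η) * ∫ ω, g ω ^ 2 ∂μ := by rw [integral_condExp hm]
  have hcs := cs_integral hf2 hceL2
  have hA : 0 ≤ ∫ ω, f ω ^ 2 ∂μ := integral_nonneg fun ω => sq_nonneg _
  calc (∫ ω, f ω * g ω ∂μ) ^ 2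
      = (∫ ω, f ω * (μ[g|m]) ω ∂μ) ^ 2 := by rw [hkey]
    _ ≤ (∫ ω, f ω ^ 2 ∂μ) * ∫ ω, (μ[g|m]) ω ^ 2 ∂μ := hcs
    _ ≤ (∫ ω, f ω ^ 2 ∂μ) * ((1 - η) * ∫ ω, g ω ^ 2 ∂μ) := by
        exact mul_le_mul_of_nonneg_left hbound hA
    _ = (1 - η) * (∫ ω, f ω ^ 2 ∂μ) * ∫ ω, g ω ^ 2 ∂μ := by ring
end
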